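/- Let L be a finite-dimensional 5-graded Lie algebra over a field k of characteristic different from 2 and 3, and let R be a commutative associative unital k-algebra. Equip the R-Lie algebra L ⊗_k R with the 5-grading (L ⊗_k R)_i = L_i ⊗_k R. Fix σ ∈ {1, −1}. If x ∈ L_σ and s ∈ L_{2σ} are such that x + s is algebraic in L, then for all λ, μ ∈ R the element (x ⊗ λ) + (s ⊗ μ) of (L ⊗_k R)_σ ⊕ (L ⊗_k R)_{2σ} is algebraic in L ⊗_k R. -/

import Mathlib

open TensorProduct

open Finset

namespace St7Aux

section uW
variable {E : Type*} [Ring E]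
def uW (X S : E) : ℕ → ℕ → E
  | 0, 0 => 1
  | 0, _+1 => 0
  | k+1, 0 => X * uW X S k 0
  | k+1, j+1 => X * uW X S k (j+1) + S * uW X S k j
variable (X S : E)
@[simp] lemma uW_zero_zero : uW X S 0 0 = 1 := rfl
@[simp] lemma uW_zero_succ (j : ℕ) : uW X S 0 (j+1) = 0 := rfl
lemma uW_succ_zero (n : ℕ) : uW X S (n+1) 0 = X * uW X S n 0 := rfl
lemma uW_succ_succ (n j : ℕ) :
    uW X S (n+1) (j+1) = X * uW X S n (j+1) + S * uW X S n j := rfl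
lemma uW_one_zero : uW X S 1 0 = X := by rw [uW_succ_zero, uW_zero_zero, mul_one]
lemma uW_one_one : uW X S 1 1 = S := by
  rw [uW_succ_succ, uW_zero_succ, uW_zero_zero, mul_zero, mul_one, zero_add]

lemma uW_of_lt : ∀ n j : ℕ, n < j → uW X S n j = 0
  | 0, j+1, _ => rfl
  | n+1, j+1, h => by
      rw [uW_succ_succ, uW_of_lt n (j+1) (by omega), uW_of_lt n j (by omega)]
      simp

lemma uW_zero_right (n : ℕ) : uW X S n 0 = X ^ n := by
  induction n with
  | zero => simp
  | succ n ih => rw [uW_succ_zero, ih, pow_succ']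

lemma add_pow_eq_sum_uW (n : ℕ) :
    (X + S) ^ n = ∑ j ∈ range (n+1), uW X S n j := by
  induction n with
  | zero => simp
  | succ n ih =>
    rw [pow_succ', ih, Finset.mul_sum]
    calc ∑ j ∈ range (n+1), (X + S) * uW X S n j
        = ∑ j ∈ range (n+1), (X * uW X S n j + S * uW X S n j) := by
          simp [add_mul]
      _ = (∑ j ∈ range (n+1), X * uW X S n j)
            + ∑ j ∈ range (n+1), S * uW X S n j := Finset.sum_add_distrib
      _ = ∑ j ∈ range (n+2), uW X S (n+1) j := by
          rw [Finset.sum_range_succ' (fun j => uW X S (n+1) j) (n+1)]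
          have h1 : ∑ j ∈ range (n+1), uW X S (n+1) (j+1)
              = ∑ j ∈ range (n+1), (X * uW X S n (j+1) + S * uW X S n j) :=
            Finset.sum_congr rfl fun j _ => uW_succ_succ X S n j
          rw [h1, Finset.sum_add_distrib, uW_succ_zero]
          rw [Finset.sum_range_succ' (fun j => X * uW X S n j) n]
          rw [Finset.sum_range_succ (fun j => X * uW X S n (j+1)) n,
            uW_of_lt X S n (n+1) (by omega)]
          simp only [mul_zero, add_zero, mul_one]
          abel
end uW

section lie
variable {A : Type*} [CommRing A] {M : Type*} [LieRing M] [LieAlgebra A M]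

lemma sum_lie'' {ι : Type*} (t : Finset ι) (f : ι → M) (y : M) :
    ⁅∑ i ∈ t, f i, y⁆ = ∑ i ∈ t, ⁅f i, y⁆ := by
  induction t using Finset.cons_induction with
  | empty => simp
  | cons i t hi ih => simp [Finset.sum_cons, ih, add_lie]

lemma lie_sum'' {ι : Type*} (t : Finset ι) (f : ι → M) (y : M) :
    ⁅y, ∑ i ∈ t, f i⁆ = ∑ i ∈ t, ⁅y, f i⁆ := by
  induction t using Finset.cons_induction with
  | empty => simp
  | cons i t hi ih => simp [Finset.sum_cons, ih, lie_add]

def P54 : Finset (ℕ × ℕ) := (range 5 ×ˢ range 5).filter (fun p => 5 ≤ p.1 + p.2)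

lemma exp_obstruction (c : ℕ → A)
    (hc : ∀ i j : ℕ, i + j ≤ 4 → c i * c j = ((i+j).choose i : A) * c (i+j))
    (v a b : M) :
    (∑ i ∈ range 5, c i • (LieAlgebra.ad A M v) ^ i) ⁅a, b⁆
      = ⁅(∑ i ∈ range 5, c i • (LieAlgebra.ad A M v) ^ i) a,
          (∑ i ∈ range 5, c i • (LieAlgebra.ad A M v) ^ i) b⁆
        - ∑ p ∈ P54, (c p.1 * c p.2) • ⁅((LieAlgebra.ad A M v) ^ p.1) a,
            ((LieAlgebra.ad A M v) ^ p.2) b⁆ := by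
  set D := LieAlgebra.ad A M v with hD
  have hR : ⁅(∑ i ∈ range 5, c i • D ^ i) a, (∑ i ∈ range 5, c i • D ^ i) b⁆
      = ∑ p ∈ range 5 ×ˢ range 5, (c p.1 * c p.2) • ⁅(D ^ p.1) a, (D ^ p.2) b⁆ := by
    rw [LinearMap.sum_apply, LinearMap.sum_apply, sum_lie'', Finset.sum_product]
    refine Finset.sum_congr rfl fun i _ => ?_
    rw [lie_sum'']
    refine Finset.sum_congr rfl fun j _ => ?_
    simp only [LinearMap.smul_apply, smul_lie, lie_smul, smul_smul, mul_comm]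
  have hL : (∑ i ∈ range 5, c i • D ^ i) ⁅a, b⁆
      = ∑ p ∈ (range 5 ×ˢ range 5).filter (fun p => ¬ 5 ≤ p.1 + p.2),
          (c p.1 * c p.2) • ⁅(D ^ p.1) a, (D ^ p.2) b⁆ := by
    have hdisj : (↑(range 5) : Set ℕ).PairwiseDisjoint
        (fun i => Finset.HasAntidiagonal.antidiagonal i) := by
      intro i _ j _ hij
      refine Finset.disjoint_left.mpr fun p hp hp' => hij ?_
      rw [Finset.HasAntidiagonal.mem_antidiagonal] at hp hp'
      omega
    have hre : (range 5).biUnion (fun i => Finset.HasAntidiagonal.antidiagonal i)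
        = (range 5 ×ˢ range 5).filter (fun p => ¬ 5 ≤ p.1 + p.2) := by
      ext p
      simp only [Finset.mem_biUnion, Finset.HasAntidiagonal.mem_antidiagonal, Finset.mem_filter,
        Finset.mem_product, Finset.mem_range]
      constructor
      · rintro ⟨i, hi, h⟩; omega
      · intro h; exact ⟨p.1 + p.2, by omega, rfl⟩
    rw [LinearMap.sum_apply, ← hre, Finset.sum_biUnion hdisj]
    refine Finset.sum_congr rfl fun i hi => ?_
    rw [Finset.mem_range] at hi
    rw [LinearMap.smul_apply, hD, LieAlgebra.ad_pow_lie]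
    rw [Finset.smul_sum]
    refine Finset.sum_congr rfl fun p hp => ?_
    rw [Finset.HasAntidiagonal.mem_antidiagonal] at hp
    rw [hc p.1 p.2 (by omega), hp]
    rw [← Nat.cast_smul_eq_nsmul A (i.choose p.1), smul_smul, mul_comm]
  rw [hL, hR, ← Finset.sum_filter_add_sum_filter_not (range 5 ×ˢ range 5)
    (fun p => 5 ≤ p.1 + p.2), P54]
  abel
end lie

section graded
variable {k : Type*} [Field k] {L : Type*} [LieRing L] [LieAlgebra k L]
variable {Lc : ℤ → Submodule k L} {σ : ℤ} {x s : L}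

lemma uW_mem (hbr : ∀ i j : ℤ, ∀ x ∈ Lc i, ∀ y ∈ Lc j, ⁅x, y⁆ ∈ Lc (i + j))
    (hx : x ∈ Lc σ) (hs : s ∈ Lc (2*σ)) :
    ∀ (n j : ℕ) (p : ℤ) (a : L), a ∈ Lc p →
      uW (LieAlgebra.ad k L x) (LieAlgebra.ad k L s) n j a ∈ Lc (p + (n + j : ℕ) * σ)
  | 0, 0, p, a, ha => by simpa using ha
  | 0, j+1, p, a, ha => by simp
  | n+1, 0, p, a, ha => by
      have ih := uW_mem hbr hx hs n 0 p a ha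
      have h2 := hbr σ _ x hx _ ih
      rw [uW_succ_zero, Module.End.mul_apply, LieAlgebra.ad_apply]
      convert h2 using 2
      push_cast; ring
  | n+1, j+1, p, a, ha => by
      have ih1 := uW_mem hbr hx hs n (j+1) p a ha
      have ih2 := uW_mem hbr hx hs n j p a ha
      have h1 := hbr σ _ x hx _ ih1
      have h2 := hbr (2*σ) _ s hs _ ih2
      rw [uW_succ_succ, LinearMap.add_apply, Module.End.mul_apply, Module.End.mul_apply,
        LieAlgebra.ad_apply, LieAlgebra.ad_apply]
      apply add_mem
      · convert h1 using 2; push_cast; ring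
      · convert h2 using 2; push_cast; ring

lemma deg_bot (hbound : ∀ i : ℤ, 2 < |i| → Lc i = ⊥) (hσ : σ = 1 ∨ σ = -1)
    {p : ℤ} {m : ℕ} (h : |p| + 2 < (m : ℤ)) : Lc (p + (m : ℤ) * σ) = ⊥ := by
  apply hbound
  have h1 := le_abs_self p
  have h2 := neg_abs_le p
  rcases hσ with h3 | h3 <;> subst h3
  · rw [mul_one, abs_of_pos (show (0:ℤ) < p + m by omega)]; omega
  · rw [show p + (m:ℤ) * (-1) = -(m - p) by ring, abs_neg,
      abs_of_pos (show (0:ℤ) < (m:ℤ) - p by omega)]; omega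

lemma a_eq_zero (hbound : ∀ i : ℤ, 2 < |i| → Lc i = ⊥) {p : ℤ} {a : L}
    (ha : a ∈ Lc p) (hp : ¬ |p| ≤ 2) : a = 0 := by
  have : Lc p = ⊥ := hbound p (by omega)
  rw [this, Submodule.mem_bot] at ha; exact ha

lemma uW_zero5 (hbr : ∀ i j : ℤ, ∀ x ∈ Lc i, ∀ y ∈ Lc j, ⁅x, y⁆ ∈ Lc (i + j))
    (hbound : ∀ i : ℤ, 2 < |i| → Lc i = ⊥) (hσ : σ = 1 ∨ σ = -1)
    (hx : x ∈ Lc σ) (hs : s ∈ Lc (2*σ))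
    (n j : ℕ) (h5 : 5 ≤ n + j) {p : ℤ} {a : L} (ha : a ∈ Lc p) :
    uW (LieAlgebra.ad k L x) (LieAlgebra.ad k L s) n j a = 0 := by
  by_cases hp : |p| ≤ 2
  · have hm := uW_mem hbr hx hs n j p a ha
    rw [deg_bot hbound hσ (by push_cast; omega), Submodule.mem_bot] at hm
    exact hm
  · rw [a_eq_zero hbound ha hp, map_zero]

lemma br_zero7 (hbr : ∀ i j : ℤ, ∀ x ∈ Lc i, ∀ y ∈ Lc j, ⁅x, y⁆ ∈ Lc (i + j))
    (hbound : ∀ i : ℤ, 2 < |i| → Lc i = ⊥) (hσ : σ = 1 ∨ σ = -1)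
    (hx : x ∈ Lc σ) (hs : s ∈ Lc (2*σ))
    {p q : ℤ} {a b : L} (ha : a ∈ Lc p) (hb : b ∈ Lc q)
    (n1 j1 n2 j2 : ℕ) (h7 : 7 ≤ n1 + j1 + n2 + j2) :
    ⁅uW (LieAlgebra.ad k L x) (LieAlgebra.ad k L s) n1 j1 a,
      uW (LieAlgebra.ad k L x) (LieAlgebra.ad k L s) n2 j2 b⁆ = 0 := by
  by_cases hp : |p| ≤ 2
  · by_cases hq : |q| ≤ 2
    · have h1 := uW_mem hbr hx hs n1 j1 p a ha
      have h2 := uW_mem hbr hx hs n2 j2 q b hb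
      have h3 := hbr _ _ _ h1 _ h2
      have h4 : (p + (n1 + j1 : ℕ) * σ) + (q + (n2 + j2 : ℕ) * σ)
          = (p + q) + ((n1 + j1 + n2 + j2 : ℕ) : ℤ) * σ := by push_cast; ring
      rw [h4] at h3
      rw [deg_bot hbound hσ (by
        have h5 := abs_le.mp hp; have h6 := abs_le.mp hq
        have h7' : |p + q| ≤ 4 := by rw [abs_le]; omega
        push_cast; omega), Submodule.mem_bot] at h3
      exact h3
    · rw [a_eq_zero hbound hb hq, map_zero, lie_zero]
  · rw [a_eq_zero hbound ha hp, map_zero, zero_lie]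

lemma brw_mem (hbr : ∀ i j : ℤ, ∀ x ∈ Lc i, ∀ y ∈ Lc j, ⁅x, y⁆ ∈ Lc (i + j))
    (hx : x ∈ Lc σ) (hs : s ∈ Lc (2*σ))
    {p q : ℤ} {a b : L} (ha : a ∈ Lc p) (hb : b ∈ Lc q)
    (n1 j1 n2 j2 : ℕ) (m : ℤ) (hm : (n1:ℤ) + j1 + n2 + j2 = m) :
    ⁅uW (LieAlgebra.ad k L x) (LieAlgebra.ad k L s) n1 j1 a,
      uW (LieAlgebra.ad k L x) (LieAlgebra.ad k L s) n2 j2 b⁆ ∈ Lc (p + q + m * σ) := by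
  have h3 := hbr _ _ _ (uW_mem hbr hx hs n1 j1 p a ha) _ (uW_mem hbr hx hs n2 j2 q b hb)
  convert h3 using 2
  rw [← hm]; push_cast; ring

end graded
section sig
variable {k : Type*} [Field k] {L : Type*} [LieRing L] [LieAlgebra k L]

/-- the weight-5 pure-`x` part of the obstruction -/
def Sig5 (c : ℕ → k) (X S : Module.End k L) (a b : L) : L :=
  (c 1 * c 4) • ⁅uW X S 1 0 a, uW X S 4 0 b⁆ + (c 2 * c 3) • ⁅uW X S 2 0 a, uW X S 3 0 b⁆
  + (c 3 * c 2) • ⁅uW X S 3 0 a, uW X S 2 0 b⁆ + (c 4 * c 1) • ⁅uW X S 4 0 a, uW X S 1 0 b⁆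

/-- the weight-6 pure-`x` part of the obstruction -/
def Sig6 (c : ℕ → k) (X S : Module.End k L) (a b : L) : L :=
  (c 2 * c 4) • ⁅uW X S 2 0 a, uW X S 4 0 b⁆ + (c 3 * c 3) • ⁅uW X S 3 0 a, uW X S 3 0 b⁆
  + (c 4 * c 2) • ⁅uW X S 4 0 a, uW X S 2 0 b⁆

/-- the weight-6 mixed part of the obstruction (four `x`, one `s`) -/
def T41 (c : ℕ → k) (X S : Module.End k L) (a b : L) : L :=
  (c 1 * c 4) • ⁅uW X S 1 1 a, uW X S 4 0 b⁆
  + (c 2 * c 3) • (⁅uW X S 2 0 a, uW X S 3 1 b⁆ + ⁅uW X S 2 1 a, uW X S 3 0 b⁆)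
  + (c 3 * c 2) • (⁅uW X S 3 0 a, uW X S 2 1 b⁆ + ⁅uW X S 3 1 a, uW X S 2 0 b⁆)
  + (c 4 * c 1) • ⁅uW X S 4 0 a, uW X S 1 1 b⁆

variable {Lc : ℤ → Submodule k L} {σ : ℤ} {x s : L}

lemma K1_decomp (c : ℕ → k)
    (hbr : ∀ i j : ℤ, ∀ x ∈ Lc i, ∀ y ∈ Lc j, ⁅x, y⁆ ∈ Lc (i + j))
    (hbound : ∀ i : ℤ, 2 < |i| → Lc i = ⊥) (hσ : σ = 1 ∨ σ = -1)
    (hx : x ∈ Lc σ) (hs : s ∈ Lc (2*σ))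
    {p q : ℤ} {a b : L} (ha : a ∈ Lc p) (hb : b ∈ Lc q) :
    ∑ pr ∈ P54, (c pr.1 * c pr.2) •
        ⁅((LieAlgebra.ad k L x + LieAlgebra.ad k L s) ^ pr.1) a,
          ((LieAlgebra.ad k L x + LieAlgebra.ad k L s) ^ pr.2) b⁆
      = Sig5 c (LieAlgebra.ad k L x) (LieAlgebra.ad k L s) a b
        + T41 c (LieAlgebra.ad k L x) (LieAlgebra.ad k L s) a b
        + Sig6 c (LieAlgebra.ad k L x) (LieAlgebra.ad k L s) a b := by
  set X := LieAlgebra.ad k L x with hX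
  set S := LieAlgebra.ad k L s with hS
  have F : ∀ (m : ℕ) (v : L), ((X+S)^m) v = ∑ j ∈ range (m+1), uW X S m j v := by
    intro m v; rw [add_pow_eq_sum_uW, LinearMap.sum_apply]
  have hu5 : ∀ (n j : ℕ), 5 ≤ n + j → ∀ {r : ℤ} {v : L}, v ∈ Lc r → uW X S n j v = 0 :=
    fun n j h5 _ v hv => uW_zero5 hbr hbound hσ hx hs n j h5 hv
  have F2 : ∀ v : L, ((X+S)^2) v = uW X S 2 0 v + uW X S 2 1 v + uW X S 2 2 v := by
    intro v; rw [F]; simp [Finset.sum_range_succ]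
  have F3 : ∀ {r : ℤ} {v : L}, v ∈ Lc r → ((X+S)^3) v = uW X S 3 0 v + uW X S 3 1 v := by
    intro r v hv; rw [F]
    simp [Finset.sum_range_succ, hu5 3 2 (by norm_num) hv, hu5 3 3 (by norm_num) hv]
  have F4 : ∀ {r : ℤ} {v : L}, v ∈ Lc r → ((X+S)^4) v = uW X S 4 0 v := by
    intro r v hv; rw [F]
    simp [Finset.sum_range_succ, hu5 4 1 (by norm_num) hv, hu5 4 2 (by norm_num) hv,
      hu5 4 3 (by norm_num) hv, hu5 4 4 (by norm_num) hv]
  have hz : ∀ n1 j1 n2 j2 : ℕ, 7 ≤ n1 + j1 + n2 + j2 →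
      ⁅uW X S n1 j1 a, uW X S n2 j2 b⁆ = 0 :=
    fun n1 j1 n2 j2 h7 => br_zero7 hbr hbound hσ hx hs ha hb n1 j1 n2 j2 h7
  rw [P54, Finset.sum_filter, Finset.sum_product]
  simp only [Finset.sum_range_succ, Finset.sum_range_zero]
  norm_num
  rw [F2 a, F2 b, F3 ha, F3 hb, F4 ha, F4 hb,
    show X a = uW X S 1 0 a by rw [uW_one_zero],
    show S a = uW X S 1 1 a by rw [uW_one_one],
    show X b = uW X S 1 0 b by rw [uW_one_zero],
    show S b = uW X S 1 1 b by rw [uW_one_one]]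
  simp only [add_lie, lie_add, smul_add,
    hz 2 1 3 1 (by norm_num), hz 2 2 3 0 (by norm_num), hz 2 2 3 1 (by norm_num),
    hz 3 0 2 2 (by norm_num), hz 3 1 2 1 (by norm_num), hz 3 1 2 2 (by norm_num),
    hz 2 1 4 0 (by norm_num), hz 2 2 4 0 (by norm_num),
    hz 4 0 2 1 (by norm_num), hz 4 0 2 2 (by norm_num),
    hz 3 0 3 1 (by norm_num), hz 3 1 3 0 (by norm_num), hz 3 1 3 1 (by norm_num),
    hz 3 0 4 0 (by norm_num), hz 3 1 4 0 (by norm_num),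
    hz 4 0 3 0 (by norm_num), hz 4 0 3 1 (by norm_num), hz 4 0 4 0 (by norm_num),
    smul_zero, add_zero, zero_add]
  rw [Sig5, T41, Sig6]
  simp only [smul_add]
  abel
end sig


section proj
variable {k : Type*} [Field k] {L : Type*} [AddCommGroup L] [Module k L]
variable {Lc : ℤ → Submodule k L}

noncomputable def projD (hdirect : DirectSum.IsInternal Lc) (δ : ℤ) : L →ₗ[k] L :=
  (Lc δ).subtype ∘ₗ
    ((DFinsupp.lapply δ : DirectSum ℤ (fun i => Lc i) →ₗ[k] Lc δ) ∘ₗ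
      (LinearEquiv.ofBijective (DirectSum.coeLinearMap Lc) hdirect).symm.toLinearMap)

lemma projD_of_mem (hdirect : DirectSum.IsInternal Lc) {δ : ℤ} {v : L}
    (hv : v ∈ Lc δ) : projD hdirect δ v = v := by
  simp only [projD, LinearMap.comp_apply, LinearEquiv.coe_coe, DFinsupp.lapply_apply,
    Submodule.coe_subtype]
  erw [DirectSum.IsInternal.ofBijective_coeLinearMap_of_mem hdirect hv]

lemma projD_of_mem_ne (hdirect : DirectSum.IsInternal Lc) {δ ε : ℤ} (hne : ε ≠ δ) {v : L}
    (hv : v ∈ Lc ε) : projD hdirect δ v = 0 := by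
  simp only [projD, LinearMap.comp_apply, LinearEquiv.coe_coe, DFinsupp.lapply_apply,
    Submodule.coe_subtype]
  erw [DirectSum.IsInternal.ofBijective_coeLinearMap_of_mem_ne hdirect hne hv]
  rfl
end proj

section sig2
variable {k : Type*} [Field k] {L : Type*} [LieRing L] [LieAlgebra k L]
variable {Lc : ℤ → Submodule k L} {σ : ℤ} {x s : L}

lemma Sig5_mem (c : ℕ → k)
    (hbr : ∀ i j : ℤ, ∀ x ∈ Lc i, ∀ y ∈ Lc j, ⁅x, y⁆ ∈ Lc (i + j))
    (hx : x ∈ Lc σ) (hs : s ∈ Lc (2*σ))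
    {p q : ℤ} {a b : L} (ha : a ∈ Lc p) (hb : b ∈ Lc q) :
    Sig5 c (LieAlgebra.ad k L x) (LieAlgebra.ad k L s) a b ∈ Lc (p + q + 5 * σ) := by
  rw [Sig5]
  refine add_mem (add_mem (add_mem ?_ ?_) ?_) ?_ <;>
    exact Submodule.smul_mem _ _ (brw_mem hbr hx hs ha hb _ _ _ _ 5 (by norm_num))

lemma Sig6_mem (c : ℕ → k)
    (hbr : ∀ i j : ℤ, ∀ x ∈ Lc i, ∀ y ∈ Lc j, ⁅x, y⁆ ∈ Lc (i + j))
    (hx : x ∈ Lc σ) (hs : s ∈ Lc (2*σ))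
    {p q : ℤ} {a b : L} (ha : a ∈ Lc p) (hb : b ∈ Lc q) :
    Sig6 c (LieAlgebra.ad k L x) (LieAlgebra.ad k L s) a b ∈ Lc (p + q + 6 * σ) := by
  rw [Sig6]
  refine add_mem (add_mem ?_ ?_) ?_ <;>
    exact Submodule.smul_mem _ _ (brw_mem hbr hx hs ha hb _ _ _ _ 6 (by norm_num))

lemma T41_mem (c : ℕ → k)
    (hbr : ∀ i j : ℤ, ∀ x ∈ Lc i, ∀ y ∈ Lc j, ⁅x, y⁆ ∈ Lc (i + j))
    (hx : x ∈ Lc σ) (hs : s ∈ Lc (2*σ))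
    {p q : ℤ} {a b : L} (ha : a ∈ Lc p) (hb : b ∈ Lc q) :
    T41 c (LieAlgebra.ad k L x) (LieAlgebra.ad k L s) a b ∈ Lc (p + q + 6 * σ) := by
  rw [T41]
  refine add_mem (add_mem (add_mem ?_ ?_) ?_) ?_ <;>
    refine Submodule.smul_mem _ _ ?_
  · exact brw_mem hbr hx hs ha hb _ _ _ _ 6 (by norm_num)
  · exact add_mem (brw_mem hbr hx hs ha hb _ _ _ _ 6 (by norm_num))
      (brw_mem hbr hx hs ha hb _ _ _ _ 6 (by norm_num))
  · exact add_mem (brw_mem hbr hx hs ha hb _ _ _ _ 6 (by norm_num))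
      (brw_mem hbr hx hs ha hb _ _ _ _ 6 (by norm_num))
  · exact brw_mem hbr hx hs ha hb _ _ _ _ 6 (by norm_num)

lemma parts_zero (c : ℕ → k)
    (hbr : ∀ i j : ℤ, ∀ x ∈ Lc i, ∀ y ∈ Lc j, ⁅x, y⁆ ∈ Lc (i + j))
    (hbound : ∀ i : ℤ, 2 < |i| → Lc i = ⊥) (hσ : σ = 1 ∨ σ = -1)
    (hx : x ∈ Lc σ) (hs : s ∈ Lc (2*σ)) (hdirect : DirectSum.IsInternal Lc)
    (h6 : (6:k) ≠ 0)
    (hA : c 1 * c 4 + c 2 * c 3 = 6 * (c 2 * c 4))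
    (hB : c 2 * c 3 + c 3 * c 2 = 6 * (c 3 * c 3))
    (hC : c 3 * c 2 + c 4 * c 1 = 6 * (c 4 * c 2))
    (HK1 : ∀ a b : L, ∑ pr ∈ P54, (c pr.1 * c pr.2) •
        ⁅((LieAlgebra.ad k L x + LieAlgebra.ad k L s) ^ pr.1) a,
          ((LieAlgebra.ad k L x + LieAlgebra.ad k L s) ^ pr.2) b⁆ = 0) :
    ∀ (p q : ℤ) (a b : L), a ∈ Lc p → b ∈ Lc q →
      Sig5 c (LieAlgebra.ad k L x) (LieAlgebra.ad k L s) a b = 0 ∧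
      T41 c (LieAlgebra.ad k L x) (LieAlgebra.ad k L s) a b = 0 ∧
      Sig6 c (LieAlgebra.ad k L x) (LieAlgebra.ad k L s) a b = 0 := by
  set X := LieAlgebra.ad k L x with hX
  set S := LieAlgebra.ad k L s with hS
  have hdec : ∀ (p q : ℤ) (a b : L), a ∈ Lc p → b ∈ Lc q →
      Sig5 c X S a b + T41 c X S a b + Sig6 c X S a b = 0 := by
    intro p q a b ha hb
    rw [← K1_decomp c hbr hbound hσ hx hs ha hb]
    exact HK1 a b
  have hne : ∀ p q : ℤ, p + q + 6*σ ≠ p + q + 5*σ := by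
    intro p q h; rcases hσ with h1 | h1 <;> omega
  -- Sig5 vanishes on homogeneous pairs
  have hS5 : ∀ (p q : ℤ) (a b : L), a ∈ Lc p → b ∈ Lc q → Sig5 c X S a b = 0 := by
    intro p q a b ha hb
    have h0 := hdec p q a b ha hb
    have h1 := congrArg (projD hdirect (p + q + 5*σ)) h0
    rw [map_add, map_add, map_zero,
      projD_of_mem hdirect (Sig5_mem c hbr hx hs ha hb),
      projD_of_mem_ne hdirect (hne p q) (T41_mem c hbr hx hs ha hb),
      projD_of_mem_ne hdirect (hne p q) (Sig6_mem c hbr hx hs ha hb)] at h1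
    simpa using h1
  -- Sig6 vanishes via the recursion
  have hS6 : ∀ (p q : ℤ) (a b : L), a ∈ Lc p → b ∈ Lc q → Sig6 c X S a b = 0 := by
    intro p q a b ha hb
    have hXa : X a ∈ Lc (σ + p) := by
      rw [hX, LieAlgebra.ad_apply]; exact hbr σ p x hx a ha
    have hXb : X b ∈ Lc (σ + q) := by
      rw [hX, LieAlgebra.ad_apply]; exact hbr σ q x hx b hb
    have e1 : Sig5 c X S (X a) b = 0 := hS5 (σ+p) q _ b hXa hb
    have e2 : Sig5 c X S a (X b) = 0 := hS5 p (σ+q) a _ ha hXb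
    have h5a : (X^5) a = 0 := by
      have := uW_zero5 hbr hbound hσ hx hs 5 0 (by norm_num) ha
      rwa [uW_zero_right] at this
    have h5b : (X^5) b = 0 := by
      have := uW_zero5 hbr hbound hσ hx hs 5 0 (by norm_num) hb
      rwa [uW_zero_right] at this
    have key : (6:k) • Sig6 c X S a b = Sig5 c X S (X a) b + Sig5 c X S a (X b) := by
      simp only [Sig5, Sig6, uW_zero_right, ← Module.End.mul_apply, ← pow_succ]
      norm_num
      rw [h5a, h5b]
      simp only [lie_zero, zero_lie, smul_zero, add_zero, zero_add, smul_add,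
        smul_smul, ← hA, ← hB, ← hC]
      module
    rw [e1, e2, add_zero] at key
    exact (smul_eq_zero.mp key).resolve_left h6
  intro p q a b ha hb
  have h0 := hdec p q a b ha hb
  have h5 := hS5 p q a b ha hb
  have h6' := hS6 p q a b ha hb
  refine ⟨h5, ?_, h6'⟩
  rw [h5, h6', zero_add, add_zero] at h0
  exact h0
end sig2

section rside
variable {k : Type*} [Field k] {L : Type*} [LieRing L] [LieAlgebra k L]
variable {R : Type*} [CommRing R] [Algebra k R]

lemma D_tmul (lam mu : R) (x s : L) (ρ : R) (v : L) :
    (LieAlgebra.ad R (R ⊗[k] L)) (lam ⊗ₜ[k] x + mu ⊗ₜ[k] s) (ρ ⊗ₜ[k] v)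
      = (lam * ρ) ⊗ₜ[k] ⁅x, v⁆ + (mu * ρ) ⊗ₜ[k] ⁅s, v⁆ := by
  rw [LieAlgebra.ad_apply, add_lie]
  rfl

lemma Dpow (lam mu : R) (x s : L) (n : ℕ) (a : L) :
    ((LieAlgebra.ad R (R ⊗[k] L) (lam ⊗ₜ[k] x + mu ⊗ₜ[k] s)) ^ n) ((1:R) ⊗ₜ[k] a)
      = ∑ ij ∈ Finset.HasAntidiagonal.antidiagonal n, (lam ^ ij.1 * mu ^ ij.2) ⊗ₜ[k]
          (uW (LieAlgebra.ad k L x) (LieAlgebra.ad k L s) n ij.2 a) := by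
  set X := LieAlgebra.ad k L x with hX
  set S := LieAlgebra.ad k L s with hS
  set D := LieAlgebra.ad R (R ⊗[k] L) (lam ⊗ₜ[k] x + mu ⊗ₜ[k] s) with hD
  induction n with
  | zero => simp
  | succ n ih =>
    rw [pow_succ', Module.End.mul_apply, ih, map_sum]
    have hterm : ∀ ij : ℕ × ℕ, D ((lam ^ ij.1 * mu ^ ij.2) ⊗ₜ[k] (uW X S n ij.2 a))
        = (lam ^ (ij.1+1) * mu ^ ij.2) ⊗ₜ[k] (X (uW X S n ij.2 a))
          + (lam ^ ij.1 * mu ^ (ij.2+1)) ⊗ₜ[k] (S (uW X S n ij.2 a)) := by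
      intro ij
      rw [hD, D_tmul]
      congr 1
      · rw [← LieAlgebra.ad_apply (R := k), ← hX]; congr 1; ring
      · rw [← LieAlgebra.ad_apply (R := k), ← hS]; congr 1; ring
    rw [Finset.sum_congr rfl fun ij _ => hterm ij, Finset.sum_add_distrib]
    -- now compare with the target
    rw [Finset.Nat.sum_antidiagonal_succ'
      (f := fun ij => (lam ^ ij.1 * mu ^ ij.2) ⊗ₜ[k] (uW X S (n+1) ij.2 a))]
    have hXsum : ∑ ij ∈ Finset.HasAntidiagonal.antidiagonal n,
          (lam ^ (ij.1+1) * mu ^ ij.2) ⊗ₜ[k] (X (uW X S n ij.2 a))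
        = (lam ^ (n+1) * mu ^ 0) ⊗ₜ[k] (X (uW X S n 0 a))
          + ∑ ij ∈ Finset.HasAntidiagonal.antidiagonal n,
              (lam ^ ij.1 * mu ^ (ij.2+1)) ⊗ₜ[k] (X (uW X S n (ij.2+1) a)) := by
      have e1 := Finset.Nat.sum_antidiagonal_succ
        (n := n) (f := fun ij => (lam ^ ij.1 * mu ^ ij.2) ⊗ₜ[k] (X (uW X S n ij.2 a)))
      have e2 := Finset.Nat.sum_antidiagonal_succ'
        (n := n) (f := fun ij => (lam ^ ij.1 * mu ^ ij.2) ⊗ₜ[k] (X (uW X S n ij.2 a)))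
      rw [e1] at e2
      rw [uW_of_lt X S n (n+1) (by omega)] at e2
      simp only [LinearMap.zero_apply, map_zero, TensorProduct.tmul_zero, add_zero,
        zero_add] at e2
      exact e2
    rw [hXsum]
    have hsplit : ∀ ij : ℕ × ℕ,
        (lam ^ ij.1 * mu ^ (ij.2+1)) ⊗ₜ[k] (uW X S (n+1) (ij.2+1) a)
          = (lam ^ ij.1 * mu ^ (ij.2+1)) ⊗ₜ[k] (X (uW X S n (ij.2+1) a))
            + (lam ^ ij.1 * mu ^ (ij.2+1)) ⊗ₜ[k] (S (uW X S n ij.2 a)) := by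
      intro ij
      rw [uW_succ_succ, ← TensorProduct.tmul_add]
      rfl
    rw [Finset.sum_congr rfl fun ij _ => hsplit ij, Finset.sum_add_distrib]
    rw [uW_succ_zero]
    have : (X * uW X S n 0) a = X (uW X S n 0 a) := rfl
    rw [this]
    abel
end rside

section rside2
variable {k : Type*} [Field k] {L : Type*} [LieRing L] [LieAlgebra k L]
variable {R : Type*} [CommRing R] [Algebra k R]
variable {Lc : ℤ → Submodule k L} {σ : ℤ} {x s : L}

lemma Q_pure_zero (c : ℕ → k)
    (hbr : ∀ i j : ℤ, ∀ x ∈ Lc i, ∀ y ∈ Lc j, ⁅x, y⁆ ∈ Lc (i + j))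
    (hbound : ∀ i : ℤ, 2 < |i| → Lc i = ⊥) (hσ : σ = 1 ∨ σ = -1)
    (hx : x ∈ Lc σ) (hs : s ∈ Lc (2*σ)) (hdirect : DirectSum.IsInternal Lc)
    (h6 : (6:k) ≠ 0)
    (hA : c 1 * c 4 + c 2 * c 3 = 6 * (c 2 * c 4))
    (hB : c 2 * c 3 + c 3 * c 2 = 6 * (c 3 * c 3))
    (hC : c 3 * c 2 + c 4 * c 1 = 6 * (c 4 * c 2))
    (HK1 : ∀ a b : L, ∑ pr ∈ P54, (c pr.1 * c pr.2) •
        ⁅((LieAlgebra.ad k L x + LieAlgebra.ad k L s) ^ pr.1) a,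
          ((LieAlgebra.ad k L x + LieAlgebra.ad k L s) ^ pr.2) b⁆ = 0)
    (lam mu : R) {p q : ℤ} {a b : L} (ha : a ∈ Lc p) (hb : b ∈ Lc q) :
    ∑ pr ∈ P54, (algebraMap k R (c pr.1) * algebraMap k R (c pr.2)) •
        ⁅((LieAlgebra.ad R (R ⊗[k] L) (lam ⊗ₜ[k] x + mu ⊗ₜ[k] s)) ^ pr.1) ((1:R) ⊗ₜ[k] a),
          ((LieAlgebra.ad R (R ⊗[k] L) (lam ⊗ₜ[k] x + mu ⊗ₜ[k] s)) ^ pr.2) ((1:R) ⊗ₜ[k] b)⁆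
      = 0 := by
  set X := LieAlgebra.ad k L x with hX
  set S := LieAlgebra.ad k L s with hS
  set D := LieAlgebra.ad R (R ⊗[k] L) (lam ⊗ₜ[k] x + mu ⊗ₜ[k] s) with hD
  obtain ⟨hS5, hT41, hS6⟩ : Sig5 c X S a b = 0 ∧ T41 c X S a b = 0 ∧ Sig6 c X S a b = 0 :=
    parts_zero c hbr hbound hσ hx hs hdirect h6 hA hB hC HK1 p q a b ha hb
  have hu5 : ∀ (n j : ℕ), 5 ≤ n + j → ∀ {r : ℤ} {v : L}, v ∈ Lc r → uW X S n j v = 0 :=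
    fun n j h5 _ v hv => uW_zero5 hbr hbound hσ hx hs n j h5 hv
  have hz : ∀ n1 j1 n2 j2 : ℕ, 7 ≤ n1 + j1 + n2 + j2 →
      ⁅uW X S n1 j1 a, uW X S n2 j2 b⁆ = 0 :=
    fun n1 j1 n2 j2 h7 => br_zero7 hbr hbound hσ hx hs ha hb n1 j1 n2 j2 h7
  have Ed1 : ∀ v : L, D ((1:R) ⊗ₜ[k] v)
      = lam ⊗ₜ[k] (uW X S 1 0 v) + mu ⊗ₜ[k] (uW X S 1 1 v) := by
    intro v
    have := Dpow (k := k) lam mu x s 1 v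
    rw [pow_one] at this
    rw [this]
    simp [Finset.Nat.sum_antidiagonal_succ]
    abel
  have Ed2 : ∀ v : L, (D^2) ((1:R) ⊗ₜ[k] v)
      = (lam^2) ⊗ₜ[k] (uW X S 2 0 v) + (lam*mu) ⊗ₜ[k] (uW X S 2 1 v)
        + (mu^2) ⊗ₜ[k] (uW X S 2 2 v) := by
    intro v
    rw [Dpow (k := k) lam mu x s 2 v]
    simp [Finset.Nat.sum_antidiagonal_succ]
    abel
  have Ed3 : ∀ {r : ℤ} {v : L}, v ∈ Lc r → (D^3) ((1:R) ⊗ₜ[k] v)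
      = (lam^3) ⊗ₜ[k] (uW X S 3 0 v) + (lam^2*mu) ⊗ₜ[k] (uW X S 3 1 v) := by
    intro r v hv
    rw [Dpow (k := k) lam mu x s 3 v]
    rw [← hX, ← hS]
    simp [Finset.Nat.sum_antidiagonal_succ, hu5 3 2 (by norm_num) hv,
      hu5 3 3 (by norm_num) hv]
    abel
  have Ed4 : ∀ {r : ℤ} {v : L}, v ∈ Lc r → (D^4) ((1:R) ⊗ₜ[k] v)
      = (lam^4) ⊗ₜ[k] (uW X S 4 0 v) := by
    intro r v hv
    rw [Dpow (k := k) lam mu x s 4 v]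
    rw [← hX, ← hS]
    simp [Finset.Nat.sum_antidiagonal_succ, hu5 4 1 (by norm_num) hv,
      hu5 4 2 (by norm_num) hv, hu5 4 3 (by norm_num) hv, hu5 4 4 (by norm_num) hv]
  rw [P54, Finset.sum_filter, Finset.sum_product]
  simp only [Finset.sum_range_succ, Finset.sum_range_zero]
  norm_num
  rw [Ed1 a, Ed1 b, Ed2 a, Ed2 b, Ed3 ha, Ed3 hb, Ed4 ha, Ed4 hb]
  simp only [add_lie, lie_add, smul_add, LieAlgebra.ExtendScalars.bracket_tmul,
    hz 2 1 3 1 (by norm_num), hz 2 2 3 0 (by norm_num), hz 2 2 3 1 (by norm_num),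
    hz 3 0 2 2 (by norm_num), hz 3 1 2 1 (by norm_num), hz 3 1 2 2 (by norm_num),
    hz 2 1 4 0 (by norm_num), hz 2 2 4 0 (by norm_num),
    hz 4 0 2 1 (by norm_num), hz 4 0 2 2 (by norm_num),
    hz 3 0 3 1 (by norm_num), hz 3 1 3 0 (by norm_num), hz 3 1 3 1 (by norm_num),
    hz 3 0 4 0 (by norm_num), hz 3 1 4 0 (by norm_num),
    hz 4 0 3 0 (by norm_num), hz 4 0 3 1 (by norm_num), hz 4 0 4 0 (by norm_num),
    TensorProduct.tmul_zero, smul_zero, add_zero, zero_add]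
  have hpull : ∀ (c1 c2 : k) (ρ : R) (v : L),
      ((algebraMap k R c1) * (algebraMap k R c2)) • (ρ ⊗ₜ[k] v) = ρ ⊗ₜ[k] ((c1 * c2) • v) := by
    intro c1 c2 ρ v
    rw [← map_mul, TensorProduct.tmul_smul, algebraMap_smul]
  simp only [hpull]
  have hgroup : ∀ z : R ⊗[k] L, z = (lam^5) ⊗ₜ[k] (Sig5 c X S a b)
      + (lam^4*mu) ⊗ₜ[k] (T41 c X S a b) + (lam^6) ⊗ₜ[k] (Sig6 c X S a b) → z = 0 := by
    intro z hzz
    rw [hzz, hS5, hT41, hS6, TensorProduct.tmul_zero, TensorProduct.tmul_zero,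
      TensorProduct.tmul_zero, add_zero, add_zero]
  apply hgroup
  simp only [Sig5, T41, Sig6, smul_add, TensorProduct.tmul_add]
  ring_nf
  abel
end rside2

end St7Aux

open St7Aux

/-- Let L be a finite-dimensional 5-graded Lie algebra over a field k of
characteristic ≠ 2, 3, and let R be a commutative k-algebra.  If x ∈ L_σ and s ∈ L_{2σ}
(σ ∈ {1,-1}) are such that x + s is algebraic in L, then for all λ, μ ∈ R the element
λ ⊗ x + μ ⊗ s is algebraic in L ⊗_k R (= R ⊗[k] L). -/
theorem statement7
    (k : Type*) [Field k] (hchar2 : (2 : k) ≠ 0) (hchar3 : (3 : k) ≠ 0)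
    (L : Type*) [LieRing L] [LieAlgebra k L] [FiniteDimensional k L]
    (Lc : ℤ → Submodule k L)
    (hdirect : DirectSum.IsInternal Lc)
    (hbracket : ∀ i j : ℤ, ∀ x ∈ Lc i, ∀ y ∈ Lc j, ⁅x, y⁆ ∈ Lc (i + j))
    (hbound : ∀ i : ℤ, 2 < |i| → Lc i = ⊥)
    (R : Type*) [CommRing R] [Algebra k R]
    (σ : ℤ) (hσ : σ = 1 ∨ σ = -1)
    (x : L) (hx : x ∈ Lc σ) (s : L) (hs : s ∈ Lc (2 * σ))
    (halg : ∃ f : L ≃ₗ⁅k⁆ L, ∀ a : L,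
      f a = (∑ i ∈ Finset.range 5,
        ((i.factorial : k)⁻¹) • (LieAlgebra.ad k L (x + s)) ^ i) a) :
    ∀ lam mu : R,
      ∃ g : (R ⊗[k] L) ≃ₗ⁅R⁆ (R ⊗[k] L), ∀ a : R ⊗[k] L,
        g a = (∑ i ∈ Finset.range 5,
          (algebraMap k R ((i.factorial : k)⁻¹)) •
            (LieAlgebra.ad R (R ⊗[k] L) (lam ⊗ₜ[k] x + mu ⊗ₜ[k] s)) ^ i) a := by
  intro lam mu
  classical
  obtain ⟨f, hf⟩ := halg
  set c : ℕ → k := fun i => ((i.factorial : k))⁻¹ with hc_def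
  -- nonvanishing of small numbers
  have h6 : (6:k) ≠ 0 := by
    have h : (6:k) = 2*3 := by norm_num
    rw [h]; exact mul_ne_zero hchar2 hchar3
  have h24 : (24:k) ≠ 0 := by
    have h : (24:k) = 2*2*2*3 := by norm_num
    rw [h]; exact mul_ne_zero (mul_ne_zero (mul_ne_zero hchar2 hchar2) hchar2) hchar3
  have hfac : ∀ n : ℕ, n ≤ 4 → ((n.factorial : k)) ≠ 0 := by
    intro n hn
    interval_cases n <;> norm_num [Nat.factorial]
    · exact hchar2
    · exact h6
    · exact h24
  have hc : ∀ i j : ℕ, i + j ≤ 4 → c i * c j = ((i+j).choose i : k) * c (i+j) := by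
    intro i j hij
    have key : ((i+j).choose i) * (i.factorial) * (j.factorial) = (i+j).factorial := by
      have := Nat.choose_mul_factorial_mul_factorial (Nat.le_add_right i j)
      simpa using this
    have keyk : (((i+j).choose i : k)) * (i.factorial : k) * (j.factorial : k)
        = ((i+j).factorial : k) := by exact_mod_cast congrArg (Nat.cast : ℕ → k) key
    have hi := hfac i (by omega)
    have hj := hfac j (by omega)
    have hij' := hfac (i+j) hij
    have hC0 : (((i+j).choose i : k)) ≠ 0 := by
      intro h0
      rw [h0, zero_mul, zero_mul] at keyk
      exact hij' keyk.symm
    simp only [hc_def]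
    have h1 : ((i.factorial : k))⁻¹ * ((j.factorial : k))⁻¹
        = ((i+j).choose i : k) * ((((i+j).choose i : k)) * (i.factorial : k)
            * (j.factorial : k))⁻¹ := by
      rw [mul_inv, mul_inv, ← mul_assoc, ← mul_assoc, mul_inv_cancel₀ hC0, one_mul]
    rw [h1, keyk]
  have hA : c 1 * c 4 + c 2 * c 3 = 6 * (c 2 * c 4) := by
    simp only [hc_def]
    norm_num [Nat.factorial]
    field_simp
    ring
  have hB : c 2 * c 3 + c 3 * c 2 = 6 * (c 3 * c 3) := by
    simp only [hc_def]
    norm_num [Nat.factorial]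
    field_simp
    ring
  have hC : c 3 * c 2 + c 4 * c 1 = 6 * (c 4 * c 2) := by
    simp only [hc_def]
    norm_num [Nat.factorial]
    field_simp
    ring
  -- the k-side obstruction vanishes
  have hds : LieAlgebra.ad k L (x + s) = LieAlgebra.ad k L x + LieAlgebra.ad k L s := by
    simp [map_add]
  have K1 : ∀ a b : L, ∑ pr ∈ P54, (c pr.1 * c pr.2) •
      ⁅((LieAlgebra.ad k L x + LieAlgebra.ad k L s) ^ pr.1) a,
        ((LieAlgebra.ad k L x + LieAlgebra.ad k L s) ^ pr.2) b⁆ = 0 := by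
    intro a b
    have h := exp_obstruction c hc (x+s) a b
    rw [← hf, ← hf, ← hf] at h
    rw [LieEquiv.map_lie] at h
    rw [eq_sub_iff_add_eq, add_eq_left] at h
    rw [← hds]
    exact h
  -- the R-side obstruction vanishes on pure tensors of homogeneous elements
  set D := LieAlgebra.ad R (R ⊗[k] L) (lam ⊗ₜ[k] x + mu ⊗ₜ[k] s) with hD
  have hQpure : ∀ (p q : ℤ) (a b : L), a ∈ Lc p → b ∈ Lc q →
      ∑ pr ∈ P54, (algebraMap k R (c pr.1) * algebraMap k R (c pr.2)) •
        ⁅(D ^ pr.1) ((1:R) ⊗ₜ[k] a), (D ^ pr.2) ((1:R) ⊗ₜ[k] b)⁆ = 0 := by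
    intro p q a b ha hb
    exact Q_pure_zero c hbracket hbound hσ hx hs hdirect h6 hA hB hC K1 lam mu ha hb
  -- extend to all elements by linearity
  have hmem : ∀ v : L, v ∈ ⨆ i, Lc i := by
    rw [hdirect.submodule_iSup_eq_top]; exact fun v => Submodule.mem_top
  have haddR : ∀ (α β β' : R ⊗[k] L),
      ∑ pr ∈ P54, (algebraMap k R (c pr.1) * algebraMap k R (c pr.2)) •
          ⁅(D ^ pr.1) α, (D ^ pr.2) (β + β')⁆
        = (∑ pr ∈ P54, (algebraMap k R (c pr.1) * algebraMap k R (c pr.2)) •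
            ⁅(D ^ pr.1) α, (D ^ pr.2) β⁆)
          + ∑ pr ∈ P54, (algebraMap k R (c pr.1) * algebraMap k R (c pr.2)) •
              ⁅(D ^ pr.1) α, (D ^ pr.2) β'⁆ := by
    intro α β β'
    rw [← Finset.sum_add_distrib]
    exact Finset.sum_congr rfl fun pr _ => by rw [map_add, lie_add, smul_add]
  have haddL : ∀ (α α' β : R ⊗[k] L),
      ∑ pr ∈ P54, (algebraMap k R (c pr.1) * algebraMap k R (c pr.2)) •
          ⁅(D ^ pr.1) (α + α'), (D ^ pr.2) β⁆
        = (∑ pr ∈ P54, (algebraMap k R (c pr.1) * algebraMap k R (c pr.2)) •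
            ⁅(D ^ pr.1) α, (D ^ pr.2) β⁆)
          + ∑ pr ∈ P54, (algebraMap k R (c pr.1) * algebraMap k R (c pr.2)) •
              ⁅(D ^ pr.1) α', (D ^ pr.2) β⁆ := by
    intro α α' β
    rw [← Finset.sum_add_distrib]
    exact Finset.sum_congr rfl fun pr _ => by rw [map_add, add_lie, smul_add]
  have hQ : ∀ α β : R ⊗[k] L,
      ∑ pr ∈ P54, (algebraMap k R (c pr.1) * algebraMap k R (c pr.2)) •
        ⁅(D ^ pr.1) α, (D ^ pr.2) β⁆ = 0 := by
    have Hpure : ∀ a b : L,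
        ∑ pr ∈ P54, (algebraMap k R (c pr.1) * algebraMap k R (c pr.2)) •
          ⁅(D ^ pr.1) ((1:R) ⊗ₜ[k] a), (D ^ pr.2) ((1:R) ⊗ₜ[k] b)⁆ = 0 := by
      have inner : ∀ (p : ℤ) (a : L), a ∈ Lc p → ∀ b : L,
          ∑ pr ∈ P54, (algebraMap k R (c pr.1) * algebraMap k R (c pr.2)) •
            ⁅(D ^ pr.1) ((1:R) ⊗ₜ[k] a), (D ^ pr.2) ((1:R) ⊗ₜ[k] b)⁆ = 0 := by
        intro p a ha b
        refine Submodule.iSup_induction (motive := fun b =>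
          ∑ pr ∈ P54, (algebraMap k R (c pr.1) * algebraMap k R (c pr.2)) •
            ⁅(D ^ pr.1) ((1:R) ⊗ₜ[k] a), (D ^ pr.2) ((1:R) ⊗ₜ[k] b)⁆ = 0) Lc (hmem b)
          (fun q b hb => hQpure p q a b ha hb) ?_ ?_
        · simp
        · intro b1 b2 h1 h2
          rw [TensorProduct.tmul_add, haddR, h1, h2, add_zero]
      intro a b
      refine Submodule.iSup_induction (motive := fun a => ∀ b : L,
          ∑ pr ∈ P54, (algebraMap k R (c pr.1) * algebraMap k R (c pr.2)) •
            ⁅(D ^ pr.1) ((1:R) ⊗ₜ[k] a), (D ^ pr.2) ((1:R) ⊗ₜ[k] b)⁆ = 0) Lc (hmem a)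
        (fun p a ha => inner p a ha) ?_ ?_ b
      · intro b; simp
      · intro a1 a2 h1 h2 b
        rw [TensorProduct.tmul_add, haddL, h1, h2, add_zero]
    intro α β
    induction α using TensorProduct.induction_on with
    | zero => simp
    | tmul r a =>
      induction β using TensorProduct.induction_on with
      | zero => simp
      | tmul r' b =>
        have h1 : (r : R) ⊗ₜ[k] a = r • ((1:R) ⊗ₜ[k] a) := by
          rw [TensorProduct.smul_tmul', smul_eq_mul, mul_one]
        have h2 : (r' : R) ⊗ₜ[k] b = r' • ((1:R) ⊗ₜ[k] b) := by
          rw [TensorProduct.smul_tmul', smul_eq_mul, mul_one]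
        rw [h1, h2]
        have : ∀ pr : ℕ × ℕ,
            (algebraMap k R (c pr.1) * algebraMap k R (c pr.2)) •
              ⁅(D ^ pr.1) (r • ((1:R) ⊗ₜ[k] a)), (D ^ pr.2) (r' • ((1:R) ⊗ₜ[k] b))⁆
            = (r * r') • ((algebraMap k R (c pr.1) * algebraMap k R (c pr.2)) •
              ⁅(D ^ pr.1) ((1:R) ⊗ₜ[k] a), (D ^ pr.2) ((1:R) ⊗ₜ[k] b)⁆) := by
          intro pr
          rw [map_smul, map_smul, smul_lie,
            lie_smul (R := R) r' ((D ^ pr.1) ((1:R) ⊗ₜ[k] a)) ((D ^ pr.2) ((1:R) ⊗ₜ[k] b)),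
            smul_smul, smul_smul, smul_smul]
          congr 1
          ring
        rw [Finset.sum_congr rfl fun pr _ => this pr, ← Finset.smul_sum, Hpure a b,
          smul_zero]
      | add β1 β2 ih1 ih2 =>
        rw [haddR, ih1, ih2, add_zero]
    | add α1 α2 ih1 ih2 =>
      rw [haddL, ih1, ih2, add_zero]
  -- multiplicativity of the truncated exponential
  have hcR : ∀ i j : ℕ, i + j ≤ 4 →
      (algebraMap k R (c i)) * (algebraMap k R (c j))
        = (((i+j).choose i : ℕ) : R) * (algebraMap k R (c (i+j))) := by
    intro i j hij
    rw [← map_mul, hc i j hij, map_mul, map_natCast]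
  set E : Module.End R (R ⊗[k] L) := ∑ i ∈ Finset.range 5, (algebraMap k R (c i)) • D ^ i
    with hE
  have hmult : ∀ α β : R ⊗[k] L, E ⁅α, β⁆ = ⁅E α, E β⁆ := by
    intro α β
    have h := exp_obstruction (fun i => algebraMap k R (c i)) hcR
      (lam ⊗ₜ[k] x + mu ⊗ₜ[k] s) α β
    rw [hQ α β, sub_zero] at h
    exact h
  -- nilpotency and invertibility
  have hD5 : D ^ 5 = 0 := by
    have hpure : ∀ v : L, (D ^ 5) ((1:R) ⊗ₜ[k] v) = 0 := by
      intro v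
      refine Submodule.iSup_induction (motive := fun v =>
        (D ^ 5) ((1:R) ⊗ₜ[k] v) = 0) Lc (hmem v) ?_ ?_ ?_
      · intro i v hv
        rw [hD, Dpow (k := k) lam mu x s 5 v]
        refine Finset.sum_eq_zero fun ij _ => ?_
        rw [uW_zero5 hbracket hbound hσ hx hs 5 ij.2 (by omega) hv,
          TensorProduct.tmul_zero]
      · simp
      · intro v1 v2 h1 h2
        rw [TensorProduct.tmul_add, map_add, h1, h2, add_zero]
    apply LinearMap.ext
    intro ξ
    rw [LinearMap.zero_apply]
    induction ξ using TensorProduct.induction_on with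
    | zero => simp
    | tmul r v =>
      have h1 : (r : R) ⊗ₜ[k] v = r • ((1:R) ⊗ₜ[k] v) := by
        rw [TensorProduct.smul_tmul', smul_eq_mul, mul_one]
      rw [h1, map_smul, hpure, smul_zero]
    | add ξ1 ξ2 ih1 ih2 =>
      rw [map_add, ih1, ih2, add_zero]
  have hc0 : c 0 = 1 := by simp [hc_def, Nat.factorial]
  have hE1 : E = 1 + ∑ i ∈ Finset.range 4, (algebraMap k R (c (i+1))) • D ^ (i+1) := by
    rw [hE, Finset.sum_range_succ' (fun i => (algebraMap k R (c i)) • D ^ i) 4]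
    rw [hc0, map_one, pow_zero, one_smul, add_comm]
  have hNnil : IsNilpotent (∑ i ∈ Finset.range 4, (algebraMap k R (c (i+1))) • D ^ (i+1)) := by
    set P : Module.End R (R ⊗[k] L) :=
      ∑ i ∈ Finset.range 4, (algebraMap k R (c (i+1))) • D ^ i with hP
    have hNP : (∑ i ∈ Finset.range 4, (algebraMap k R (c (i+1))) • D ^ (i+1)) = D * P := by
      rw [hP, Finset.mul_sum]
      exact Finset.sum_congr rfl fun i _ => by rw [mul_smul_comm, ← pow_succ']
    have hcomm : Commute D P := by
      refine Commute.sum_right _ _ _ fun i _ => ?_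
      exact ((Commute.refl D).pow_right i).smul_right _
    exact ⟨5, by rw [hNP, hcomm.mul_pow, hD5, zero_mul]⟩
  have hunit : IsUnit E := by
    rw [hE1]; exact hNnil.isUnit_one_add
  have hbij : Function.Bijective E := (Module.End.isUnit_iff E).mp hunit
  let e := LinearEquiv.ofBijective (E : (R ⊗[k] L) →ₗ[R] (R ⊗[k] L)) hbij
  refine ⟨{ toLinearMap := (E : (R ⊗[k] L) →ₗ[R] (R ⊗[k] L)),
            map_lie' := fun {α β} => hmult α β,
            invFun := e.symm,
            left_inv := fun z => e.symm_apply_apply z,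
            right_inv := fun z => e.apply_symm_apply z }, fun α => rfl⟩
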